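/- Let β = 0 and λ ∈ (0,1]. Then the function u : T_m → ℝ defined by u(x) = (1-λ)^{|x|} satisfies -Δ_β u(x) = λ u(x) for all x ∈ T_m, and u(x_n) → 0 along every branch {x_n} of T_m. Hence every λ ∈ (0,1] is a principal eigenvalue of Δ_0. -/

import Mathlib

open Filter Finset Topology

/-- The weight `p_β`: `1` if `β = 0`, and `β/(1-β)` otherwise. -/
noncomputable def pB (β : ℝ) : ℝ := if β = 0 then 1 else β / (1 - β)

/-- Vertices of the regular `m`-branching tree are finite sequences over `Fin m`
(the root is `[]`, the successors of `x` are `i :: x`, the predecessor of `a :: t` is `t`,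
and the level `|x|` is the list length).  The `β`-Laplacian on the tree. -/
noncomputable def lapB (m : ℕ) (β : ℝ) (u : List (Fin m) → ℝ) : List (Fin m) → ℝ
  | [] => (∑ i : Fin m, u [i]) / m - u []
  | a :: t =>
      (β * u t + (1 - β) * (∑ i : Fin m, u (i :: a :: t)) / m - u (a :: t)) *
        pB β ^ (-((a :: t).length : ℤ))

/-- A branch: an infinite path starting at the root, following successors. -/
def IsBranch (m : ℕ) (b : ℕ → List (Fin m)) : Prop :=
  b 0 = [] ∧ ∀ n, ∃ i : Fin m, b (n + 1) = i :: b n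

/-- Homogeneous Dirichlet boundary condition: `u → 0` along every branch. -/
def ZeroOnBoundary (m : ℕ) (u : List (Fin m) → ℝ) : Prop :=
  ∀ b : ℕ → List (Fin m), IsBranch m b → Tendsto (fun n => u (b n)) atTop (𝓝 0)

/-- `lam` is a principal eigenvalue of `Δ_β`: it is positive and admits a bounded
nonnegative nontrivial eigenfunction vanishing on the boundary. -/
def IsPrincipalEigenvalue (m : ℕ) (β lam : ℝ) : Prop :=
  0 < lam ∧ ∃ u : List (Fin m) → ℝ,
    (∃ M, ∀ x, |u x| ≤ M) ∧ (∀ x, 0 ≤ u x) ∧ u ≠ 0 ∧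
    (∀ x, -lapB m β u x = lam * u x) ∧ ZeroOnBoundary m u

/-- Membership in the set `A_β`. -/
def memA (m : ℕ) (β lam : ℝ) : Prop :=
  0 < lam ∧ ∃ v : List (Fin m) → ℝ, ∃ c C : ℝ, 0 < c ∧
    (∀ x, c < v x ∧ v x < C) ∧ ∀ x, lapB m β v x + lam * v x ≤ 0

/-- `λ₁(β) = sup A_β`. -/
noncomputable def lam1 (m : ℕ) (β : ℝ) : ℝ := sSup {lam | memA m β lam}

theorem stmt0 (m : ℕ) (hm : 2 ≤ m) (lam : ℝ) (hl : 0 < lam) (hl1 : lam ≤ 1) :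
    (∀ x : List (Fin m),
      -lapB m 0 (fun y => (1 - lam) ^ y.length) x = lam * (1 - lam) ^ x.length) ∧
    ZeroOnBoundary m (fun y : List (Fin m) => (1 - lam) ^ y.length) ∧
    IsPrincipalEigenvalue m 0 lam := by
  have hm0 : (0:ℝ) < m := by positivity
  have hr0 : (0:ℝ) ≤ 1 - lam := by linarith
  have hr1 : 1 - lam < 1 := by linarith
  have heig : ∀ x : List (Fin m),
      -lapB m 0 (fun y => (1 - lam) ^ y.length) x = lam * (1 - lam) ^ x.length := by
    intro x
    cases x with
    | nil =>
        simp only [lapB, List.length_nil, List.length_cons, pow_zero, pow_one]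
        rw [Finset.sum_const, Finset.card_univ, Fintype.card_fin]
        simp only [nsmul_eq_mul]
        field_simp
        ring
    | cons a t =>
        simp only [lapB, pB, if_pos rfl, List.length_cons, if_true, one_zpow, mul_one,
          zero_mul, zero_add, sub_zero, one_mul]
        rw [Finset.sum_const, Finset.card_univ, Fintype.card_fin]
        simp only [nsmul_eq_mul]
        have : (m:ℝ) * (1 - lam) ^ (t.length + 1 + 1) / m = (1 - lam) ^ (t.length + 1 + 1) := by
          field_simp
        rw [this, pow_succ (1 - lam) (t.length + 1)]
        ring
  have hbd : ZeroOnBoundary m (fun y : List (Fin m) => (1 - lam) ^ y.length) := by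
    intro b hb
    have hlen : ∀ n, (b n).length = n := by
      intro n
      induction n with
      | zero => rw [hb.1]; rfl
      | succ n ih => obtain ⟨i, hi⟩ := hb.2 n; rw [hi]; simp [ih]
    have : (fun n => (fun y : List (Fin m) => (1 - lam) ^ y.length) (b n))
        = fun n => (1 - lam) ^ n := by funext n; simp [hlen n]
    rw [this]
    exact tendsto_pow_atTop_nhds_zero_of_lt_one hr0 hr1
  refine ⟨heig, hbd, hl, fun y => (1 - lam) ^ y.length, ⟨1, ?_⟩, ?_, ?_, heig, hbd⟩
  · intro x
    rw [abs_of_nonneg (pow_nonneg hr0 _)]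
    exact pow_le_one₀ hr0 (by linarith)
  · intro x; exact pow_nonneg hr0 _
  · intro h
    have := congrFun h []
    simp at this
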